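/- Fix K ≥ 1 and delays 0 < τ₁ ≤ … ≤ τ_K. Let Z₀, Z₁ᵢ ∈ ℝ^{p×n} and Z₂ᵢ : [−τ_i,0] → ℝ^{p×n} continuous, and define Zc : ℝⁿ × ∏_i C([−τ_i,0];ℝⁿ) → ℝ^p by Zc(x,φ) := Z₀x + Σ_i Z₁ᵢ φ_i(−τ_i) + Σ_i ∫_{−τ_i}^0 Z₂ᵢ(s) φ_i(s) ds. Let P̂ ∈ ℝ^{n×n} and let Q̂_i : [−τ_i,0] → ℝ^{n×n}, Ŝ_i : [−τ_i,0] → ℝ^{n×n}, R̂_ij : [−τ_i,0]×[−τ_j,0] → ℝ^{n×n} be continuous, and define the operator P̂_op by: first component P̂ x + (1/τ_K) Σ_i ∫_{−τ_i}^0 Q̂_i(s)φ_i(s) ds; i-th function component at s: Q̂_i(s)ᵀ x + (1/τ_K) Ŝ_i(s)φ_i(s) + (1/τ_K) Σ_j ∫_{−τ_j}^0 R̂_ij(s,θ)φ_j(θ) dθ. Then for every x ∈ ℝⁿ and every tuple of continuous functions φ_i : [−τ_i,0] → ℝⁿ, Zc(P̂_op(x,φ)) = K₀ x + Σ_i K₁ᵢ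 φ_i(−τ_i) + Σ_i ∫_{−τ_i}^0 K₂ᵢ(s) φ_i(s) ds, where K₀ = Z₀P̂ + Σ_j ( Z₁ⱼ Q̂_j(−τ_j)ᵀ + ∫_{−τ_j}^0 Z₂ⱼ(s) Q̂_j(s)ᵀ ds ), K₁ᵢ = (1/τ_K) Z₁ᵢ Ŝ_i(−τ_i), and K₂ᵢ(s) = (1/τ_K)( Z₀ Q̂_i(s) + Z₂ᵢ(s) Ŝ_i(s) + Σ_j ( Z₁ⱼ R̂_ji(−τ_j,s) + ∫_{−τ_j}^0 Z₂ⱼ(θ) R̂_ji(θ,s) dθ ) ). -/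

import Mathlib

open MeasureTheory Matrix

noncomputable section

/-- Entrywise integral of a matrix-valued function over a set of reals. -/
def mIntOn {α β : Type*} (A : Set ℝ) (f : ℝ → Matrix α β ℝ) : Matrix α β ℝ :=
  Matrix.of fun k l => ∫ s in A, f s k l

/-- The inner product of the space `Z_{α,β,κ}` (the Hilbert space
`ℝ^α × ∏_{i ∈ κ} L²([−τᵢ,0];ℝ^β)`), on the representation by genuine functions:
`⟨(y,ψ),(x,φ)⟩ = τ_K yᵀx + Σ_i ∫_{−τ_i}^0 ψ_i(s)ᵀφ_i(s) ds`. -/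
def innerZ {κ α β : Type*} [Fintype κ] [Fintype α] [Fintype β]
    (τmax : ℝ) (τ : κ → ℝ)
    (x y : (α → ℝ) × (κ → ℝ → β → ℝ)) : ℝ :=
  τmax * (x.1 ⬝ᵥ y.1) +
    ∑ i, ∫ s in Set.Icc (-(τ i)) 0, (x.2 i s) ⬝ᵥ (y.2 i s)

/-- Membership in `Z_{α,β,κ}`: each function component is square integrable on its
interval `[−τᵢ,0]`. -/
def memZ {κ α β : Type*} [Fintype κ] [Fintype β]
    (τ : κ → ℝ) (x : (α → ℝ) × (κ → ℝ → β → ℝ)) : Prop :=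
  ∀ i, MemLp (x.2 i) 2 (volume.restrict (Set.Icc (-(τ i)) 0))

/-- Membership in the state space `X ⊆ Z_{n,K}`: each `φᵢ` lies in `W^{1,2}([−τᵢ,0];ℝⁿ)`
(absolutely continuous with square-integrable derivative) and `φᵢ(0) = x`. -/
def memX {κ : Type*} [Fintype κ] {n : ℕ}
    (τ : κ → ℝ) (x : (Fin n → ℝ) × (κ → ℝ → Fin n → ℝ)) : Prop :=
  memZ τ x ∧ ∀ i, x.2 i 0 = x.1 ∧
    ∃ d : ℝ → Fin n → ℝ,
      MemLp d 2 (volume.restrict (Set.Icc (-(τ i)) 0)) ∧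
      ∀ s ∈ Set.Icc (-(τ i)) 0, x.2 i s = x.1 - ∫ θ in Set.Ioc s 0, d θ

/-- The operator `𝒫_{P,Qᵢ,Sᵢ,Rᵢⱼ} : Z_{α,β,κ} → Z_{α,β,κ}`:
first component `P x + Σ_i ∫_{−τ_i}^0 Q_i(s)φ_i(s) ds`; `i`-th function component at `s`:
`τ_K Q_i(s)ᵀ x + τ_K S_i(s) φ_i(s) + Σ_j ∫_{−τ_j}^0 R_ij(s,θ) φ_j(θ) dθ`. -/
def Pop {κ α β : Type*} [Fintype κ] [Fintype α] [Fintype β]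
    (τmax : ℝ) (τ : κ → ℝ)
    (P : Matrix α α ℝ) (Q : κ → ℝ → Matrix α β ℝ)
    (S : κ → ℝ → Matrix β β ℝ) (R : κ → κ → ℝ → ℝ → Matrix β β ℝ)
    (x : (α → ℝ) × (κ → ℝ → β → ℝ)) : (α → ℝ) × (κ → ℝ → β → ℝ) :=
  (P.mulVec x.1 + ∑ i, ∫ s in Set.Icc (-(τ i)) 0, (Q i s).mulVec (x.2 i s),
   fun i s => τmax • ((Q i s)ᵀ.mulVec x.1) + τmax • ((S i s).mulVec (x.2 i s))
     + ∑ j, ∫ θ in Set.Icc (-(τ j)) 0, (R i j s θ).mulVec (x.2 j θ))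

end


section ControllerHelpers

open MeasureTheory Matrix

variable {n p : ℕ}

lemma pi_integral_apply' {X : Type*} [MeasurableSpace X] {μ : Measure X}
    {f : X → Fin n → ℝ} (hf : Integrable f μ) (l : Fin n) :
    (∫ s, f s ∂μ) l = ∫ s, f s l ∂μ :=
  (ContinuousLinearMap.integral_comp_comm
    (ContinuousLinearMap.proj (R := ℝ) (φ := fun _ : Fin n => ℝ) l) hf).symm

lemma mulVec_integral' {X : Type*} [MeasurableSpace X] {μ : Measure X}
    (M : Matrix (Fin p) (Fin n) ℝ) {f : X → Fin n → ℝ} (hf : Integrable f μ) :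
    M.mulVec (∫ s, f s ∂μ) = ∫ s, M.mulVec (f s) ∂μ :=
  (ContinuousLinearMap.integral_comp_comm
    (LinearMap.toContinuousLinearMap (Matrix.mulVecLin M)) hf).symm

lemma mulVec_contOn' {α : Type*} [TopologicalSpace α] {q r : ℕ} {S : Set α}
    {M : α → Matrix (Fin q) (Fin r) ℝ}
    (hM : ∀ k l, ContinuousOn (fun x => M x k l) S) {v : α → Fin r → ℝ}
    (hv : ∀ l, ContinuousOn (fun x => v x l) S) (k : Fin q) :
    ContinuousOn (fun x => (M x).mulVec (v x) k) S := by
  simp only [Matrix.mulVec, dotProduct]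
  exact continuousOn_finset_sum _ fun l _ => (hM k l).mul (hv l)

lemma entry_mul_contOn' {α : Type*} [TopologicalSpace α] {q r t : ℕ} {S : Set α}
    {M : α → Matrix (Fin q) (Fin r) ℝ} {N : α → Matrix (Fin r) (Fin t) ℝ}
    (hM : ∀ k l, ContinuousOn (fun x => M x k l) S)
    (hN : ∀ k l, ContinuousOn (fun x => N x k l) S) (k : Fin q) (l : Fin t) :
    ContinuousOn (fun x => (M x * N x) k l) S := by
  simp only [Matrix.mul_apply]
  exact continuousOn_finset_sum _ fun m _ => (hM k m).mul (hN m l)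

lemma integrableOn_pi' {A : Set ℝ} (hA : IsCompact A) {f : ℝ → Fin n → ℝ}
    (hf : ∀ l, ContinuousOn (fun s => f s l) A) : IntegrableOn f A :=
  (continuousOn_pi.2 hf).integrableOn_compact hA

lemma mIntOn_mulVec' {A : Set ℝ} (hA : IsCompact A) {M : ℝ → Matrix (Fin p) (Fin n) ℝ}
    (hM : ∀ k l, ContinuousOn (fun s => M s k l) A) (v : Fin n → ℝ) :
    (mIntOn A M).mulVec v = ∫ s in A, (M s).mulVec v := by
  have hint : IntegrableOn (fun s => (M s).mulVec v) A :=
    integrableOn_pi' hA (mulVec_contOn' hM (fun _ => continuousOn_const))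
  funext k
  rw [pi_integral_apply' hint k]
  simp only [Matrix.mulVec, dotProduct, mIntOn, Matrix.of_apply]
  rw [integral_finset_sum (f := fun l s => M s k l * v l) _ fun l _ =>
    (((hM k l).mul continuousOn_const).integrableOn_compact hA)]
  exact Finset.sum_congr rfl fun l _ => (integral_mul_const _ _).symm

lemma integrable_prod_restrict' {A B : Set ℝ} (hA : IsCompact A) (hB : IsCompact B)
    {f : ℝ × ℝ → Fin n → ℝ} (hf : ∀ l, ContinuousOn (fun q => f q l) (A ×ˢ B)) :
    Integrable f ((volume.restrict A).prod (volume.restrict B)) := by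
  rw [MeasureTheory.Measure.prod_restrict]
  exact (continuousOn_pi.2 hf).integrableOn_compact (hA.prod hB)

lemma fubini_Icc' {A B : Set ℝ} (hA : IsCompact A) (hB : IsCompact B)
    {g : ℝ → ℝ → Fin n → ℝ}
    (hg : ∀ l, ContinuousOn (fun q : ℝ × ℝ => g q.1 q.2 l) (A ×ˢ B)) :
    (∫ s in A, ∫ θ in B, g s θ) = ∫ θ in B, ∫ s in A, g s θ :=
  integral_integral_swap (integrable_prod_restrict' hA hB hg)

lemma sum_mulVec' {ι : Type*} (u : Finset ι) (M : ι → Matrix (Fin p) (Fin n) ℝ)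
    (v : Fin n → ℝ) : (∑ j ∈ u, M j).mulVec v = ∑ j ∈ u, (M j).mulVec v := by
  funext k
  simp only [Matrix.mulVec, dotProduct, Finset.sum_apply, Matrix.sum_apply,
    Finset.sum_mul]
  exact Finset.sum_comm

lemma mulVec_finset_sum' {ι : Type*} (u : Finset ι) (M : Matrix (Fin p) (Fin n) ℝ)
    (v : ι → Fin n → ℝ) : M.mulVec (∑ j ∈ u, v j) = ∑ j ∈ u, M.mulVec (v j) :=
  map_sum (Matrix.mulVecLin M) _ _

lemma lem1' (c : ℝ) (hc : c ≠ 0) (Z : Matrix (Fin p) (Fin n) ℝ)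
    (Q : Matrix (Fin n) (Fin n) ℝ) (x : Fin n → ℝ) :
    Z.mulVec (c • ((c⁻¹ • Q)ᵀ.mulVec x)) = (Z * Qᵀ).mulVec x := by
  rw [Matrix.transpose_smul, Matrix.smul_mulVec, Matrix.mulVec_smul,
    Matrix.mulVec_smul, smul_smul, mul_inv_cancel₀ hc, one_smul, Matrix.mulVec_mulVec]

lemma lem2' (c : ℝ) (hc : c ≠ 0) (Z : Matrix (Fin p) (Fin n) ℝ)
    (S : Matrix (Fin n) (Fin n) ℝ) (v : Fin n → ℝ) :
    Z.mulVec (c • (((c ^ 2)⁻¹ • S).mulVec v)) = c⁻¹ • ((Z * S).mulVec v) := by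
  rw [Matrix.smul_mulVec, Matrix.mulVec_smul, Matrix.mulVec_smul,
    Matrix.mulVec_mulVec, smul_smul,
    show c * (c ^ 2)⁻¹ = c⁻¹ by rw [sq, mul_inv, ← mul_assoc, mul_inv_cancel₀ hc, one_mul]]

lemma lem3' (c : ℝ) (Z : Matrix (Fin p) (Fin n) ℝ)
    (R : Matrix (Fin n) (Fin n) ℝ) (v : Fin n → ℝ) :
    Z.mulVec ((c⁻¹ • R).mulVec v) = c⁻¹ • ((Z * R).mulVec v) := by
  rw [Matrix.smul_mulVec, Matrix.mulVec_smul, Matrix.mulVec_mulVec]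

end ControllerHelpers

set_option maxHeartbeats 1000000 in
/-- Lemma 5: controller reconstruction `u = 𝒵 𝒫̂ x`.
Composing the control operator `𝒵` with the hat-operator
`𝒫_{P̂,(1/τ_K)Q̂ᵢ,(1/τ_K²)Ŝᵢ,(1/τ_K)R̂ᵢⱼ}` yields the explicit gains `K₀, K₁ᵢ, K₂ᵢ`. -/
theorem controller_reconstruction
    {K n p : ℕ} (τ : Fin (K + 1) → ℝ)
    (hτpos : ∀ i, 0 < τ i) (hτmono : Monotone τ)
    (Z₀ : Matrix (Fin p) (Fin n) ℝ) (Z₁ : Fin (K + 1) → Matrix (Fin p) (Fin n) ℝ)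
    (Z₂ : Fin (K + 1) → ℝ → Matrix (Fin p) (Fin n) ℝ)
    (hZ₂ : ∀ i k l, ContinuousOn (fun s => Z₂ i s k l) (Set.Icc (-(τ i)) 0))
    (Phat : Matrix (Fin n) (Fin n) ℝ)
    (Qhat Shat : Fin (K + 1) → ℝ → Matrix (Fin n) (Fin n) ℝ)
    (Rhat : Fin (K + 1) → Fin (K + 1) → ℝ → ℝ → Matrix (Fin n) (Fin n) ℝ)
    (hQhat : ∀ i k l, ContinuousOn (fun s => Qhat i s k l) (Set.Icc (-(τ i)) 0))
    (hShat : ∀ i k l, ContinuousOn (fun s => Shat i s k l) (Set.Icc (-(τ i)) 0))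
    (hRhat : ∀ i j k l, ContinuousOn (fun q : ℝ × ℝ => Rhat i j q.1 q.2 k l)
      ((Set.Icc (-(τ i)) 0) ×ˢ (Set.Icc (-(τ j)) 0)))
    (x : Fin n → ℝ) (φ : Fin (K + 1) → ℝ → Fin n → ℝ)
    (hφ : ∀ i l, ContinuousOn (fun s => φ i s l) (Set.Icc (-(τ i)) 0))
    -- the gains
    (K₀ : Matrix (Fin p) (Fin n) ℝ) (K₁ : Fin (K + 1) → Matrix (Fin p) (Fin n) ℝ)
    (K₂ : Fin (K + 1) → ℝ → Matrix (Fin p) (Fin n) ℝ)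
    (hK₀ : K₀ = Z₀ * Phat + ∑ j, (Z₁ j * (Qhat j (-(τ j)))ᵀ
      + mIntOn (Set.Icc (-(τ j)) 0) fun s => Z₂ j s * (Qhat j s)ᵀ))
    (hK₁ : ∀ i, K₁ i = (τ (Fin.last K))⁻¹ • (Z₁ i * Shat i (-(τ i))))
    (hK₂ : ∀ i s, K₂ i s = (τ (Fin.last K))⁻¹ •
      (Z₀ * Qhat i s + Z₂ i s * Shat i s
        + ∑ j, (Z₁ j * Rhat j i (-(τ j)) s
            + mIntOn (Set.Icc (-(τ j)) 0) fun θ => Z₂ j θ * Rhat j i θ s))) :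
    -- `u = 𝒵 (𝒫̂ (x,φ))` equals the gain formula
    (Z₀.mulVec (Pop (τ (Fin.last K)) τ Phat
        (fun i s => (τ (Fin.last K))⁻¹ • Qhat i s)
        (fun i s => ((τ (Fin.last K)) ^ 2)⁻¹ • Shat i s)
        (fun i j s θ => (τ (Fin.last K))⁻¹ • Rhat i j s θ) (x, φ)).1
      + ∑ i, (Z₁ i).mulVec ((Pop (τ (Fin.last K)) τ Phat
        (fun i s => (τ (Fin.last K))⁻¹ • Qhat i s)
        (fun i s => ((τ (Fin.last K)) ^ 2)⁻¹ • Shat i s)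
        (fun i j s θ => (τ (Fin.last K))⁻¹ • Rhat i j s θ) (x, φ)).2 i (-(τ i)))
      + ∑ i, ∫ s in Set.Icc (-(τ i)) 0,
          (Z₂ i s).mulVec ((Pop (τ (Fin.last K)) τ Phat
        (fun i s => (τ (Fin.last K))⁻¹ • Qhat i s)
        (fun i s => ((τ (Fin.last K)) ^ 2)⁻¹ • Shat i s)
        (fun i j s θ => (τ (Fin.last K))⁻¹ • Rhat i j s θ) (x, φ)).2 i s))
    = K₀.mulVec x + ∑ i, (K₁ i).mulVec (φ i (-(τ i)))
        + ∑ i, ∫ s in Set.Icc (-(τ i)) 0, (K₂ i s).mulVec (φ i s) := by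
  have hc : τ (Fin.last K) ≠ 0 := ne_of_gt (hτpos _)
  set c : ℝ := τ (Fin.last K) with hc_def
  have hmemA : ∀ i : Fin (K + 1), -(τ i) ∈ Set.Icc (-(τ i)) 0 :=
    fun i => ⟨le_refl _, neg_nonpos.2 (hτpos i).le⟩
  -- continuity of `Rhat` slices
  have hR1 : ∀ (i j : Fin (K + 1)) {s : ℝ}, s ∈ Set.Icc (-(τ i)) 0 → ∀ (k l : Fin n),
      ContinuousOn (fun θ => Rhat i j s θ k l) (Set.Icc (-(τ j)) 0) := by
    intro i j s hs k l
    exact (hRhat i j k l).comp ((continuous_const.prodMk continuous_id).continuousOn)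
      fun θ hθ => Set.mk_mem_prod hs hθ
  have hR2 : ∀ (i j : Fin (K + 1)) {s : ℝ}, s ∈ Set.Icc (-(τ j)) 0 → ∀ (k l : Fin n),
      ContinuousOn (fun θ => Rhat i j θ s k l) (Set.Icc (-(τ i)) 0) := by
    intro i j s hs k l
    exact (hRhat i j k l).comp ((continuous_id.prodMk continuous_const).continuousOn)
      fun θ hθ => Set.mk_mem_prod hθ hs
  -- T1
  have T1 : Z₀.mulVec (Pop c τ Phat
        (fun i s => c⁻¹ • Qhat i s)
        (fun i s => (c ^ 2)⁻¹ • Shat i s)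
        (fun i j s θ => c⁻¹ • Rhat i j s θ) (x, φ)).1
      = (Z₀ * Phat).mulVec x
        + ∑ i, ∫ s in Set.Icc (-(τ i)) 0, c⁻¹ • ((Z₀ * Qhat i s).mulVec (φ i s)) := by
    simp only [Pop]
    rw [Matrix.mulVec_add, Matrix.mulVec_mulVec, mulVec_finset_sum']
    congr 1
    refine Finset.sum_congr rfl fun i _ => ?_
    have hint : IntegrableOn (fun s => (c⁻¹ • Qhat i s).mulVec (φ i s))
        (Set.Icc (-(τ i)) 0) :=
      integrableOn_pi' isCompact_Icc (mulVec_contOn' (M := fun s => c⁻¹ • Qhat i s)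
        (v := φ i) (fun k l => continuousOn_const.mul (hQhat i k l)) (hφ i))
    rw [mulVec_integral' Z₀ hint]
    simp only [lem3']
  -- T2
  have T2 : ∀ i, (Z₁ i).mulVec ((Pop c τ Phat
        (fun i s => c⁻¹ • Qhat i s)
        (fun i s => (c ^ 2)⁻¹ • Shat i s)
        (fun i j s θ => c⁻¹ • Rhat i j s θ) (x, φ)).2 i (-(τ i)))
      = (Z₁ i * (Qhat i (-(τ i)))ᵀ).mulVec x
        + c⁻¹ • ((Z₁ i * Shat i (-(τ i))).mulVec (φ i (-(τ i))))
        + ∑ j, ∫ θ in Set.Icc (-(τ j)) 0,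
            c⁻¹ • ((Z₁ i * Rhat i j (-(τ i)) θ).mulVec (φ j θ)) := by
    intro i
    simp only [Pop]
    rw [Matrix.mulVec_add, Matrix.mulVec_add, mulVec_finset_sum', lem1' c hc, lem2' c hc]
    congr 1
    refine Finset.sum_congr rfl fun j _ => ?_
    have hint : IntegrableOn (fun θ => (c⁻¹ • Rhat i j (-(τ i)) θ).mulVec (φ j θ))
        (Set.Icc (-(τ j)) 0) :=
      integrableOn_pi' isCompact_Icc
        (mulVec_contOn' (M := fun θ => c⁻¹ • Rhat i j (-(τ i)) θ) (v := φ j)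
          (fun k l => continuousOn_const.mul (hR1 i j (hmemA i) k l)) (hφ j))
    rw [mulVec_integral' (Z₁ i) hint]
    simp only [lem3']
  -- T3
  have T3 : ∀ i, (∫ s in Set.Icc (-(τ i)) 0, (Z₂ i s).mulVec ((Pop c τ Phat
        (fun i s => c⁻¹ • Qhat i s)
        (fun i s => (c ^ 2)⁻¹ • Shat i s)
        (fun i j s θ => c⁻¹ • Rhat i j s θ) (x, φ)).2 i s))
      = (∫ s in Set.Icc (-(τ i)) 0, (Z₂ i s * (Qhat i s)ᵀ).mulVec x)
        + (∫ s in Set.Icc (-(τ i)) 0, c⁻¹ • ((Z₂ i s * Shat i s).mulVec (φ i s)))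
        + ∑ j, ∫ θ in Set.Icc (-(τ j)) 0, ∫ s in Set.Icc (-(τ i)) 0,
            c⁻¹ • ((Z₂ i s * Rhat i j s θ).mulVec (φ j θ)) := by
    intro i
    simp only [Pop]
    -- pointwise simplification on the interval
    have hEq : Set.EqOn
        (fun s => (Z₂ i s).mulVec (c • ((c⁻¹ • Qhat i s)ᵀ.mulVec x)
          + c • (((c ^ 2)⁻¹ • Shat i s).mulVec (φ i s))
          + ∑ j, ∫ θ in Set.Icc (-(τ j)) 0, (c⁻¹ • Rhat i j s θ).mulVec (φ j θ)))
        (fun s => (Z₂ i s * (Qhat i s)ᵀ).mulVec x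
          + c⁻¹ • ((Z₂ i s * Shat i s).mulVec (φ i s))
          + ∑ j, ∫ θ in Set.Icc (-(τ j)) 0,
              c⁻¹ • ((Z₂ i s * Rhat i j s θ).mulVec (φ j θ)))
        (Set.Icc (-(τ i)) 0) := by
      intro s hs
      show (Z₂ i s).mulVec _ = _
      rw [Matrix.mulVec_add, Matrix.mulVec_add, mulVec_finset_sum', lem1' c hc, lem2' c hc]
      congr 1
      refine Finset.sum_congr rfl fun j _ => ?_
      have hint : IntegrableOn (fun θ => (c⁻¹ • Rhat i j s θ).mulVec (φ j θ))
          (Set.Icc (-(τ j)) 0) :=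
        integrableOn_pi' isCompact_Icc
          (mulVec_contOn' (M := fun θ => c⁻¹ • Rhat i j s θ) (v := φ j)
            (fun k l => continuousOn_const.mul (hR1 i j hs k l)) (hφ j))
      rw [mulVec_integral' (Z₂ i s) hint]
      simp only [lem3']
    rw [setIntegral_congr_fun measurableSet_Icc hEq]
    -- integrability of the three pieces
    have ha : IntegrableOn (fun s => (Z₂ i s * (Qhat i s)ᵀ).mulVec x)
        (Set.Icc (-(τ i)) 0) :=
      integrableOn_pi' isCompact_Icc
        (mulVec_contOn' (M := fun s => Z₂ i s * (Qhat i s)ᵀ) (v := fun _ => x)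
          (entry_mul_contOn' (M := fun s => Z₂ i s) (N := fun s => (Qhat i s)ᵀ)
            (hZ₂ i) (fun k l => hQhat i l k)) (fun _ => continuousOn_const))
    have hb : IntegrableOn (fun s => c⁻¹ • ((Z₂ i s * Shat i s).mulVec (φ i s)))
        (Set.Icc (-(τ i)) 0) :=
      (integrableOn_pi' isCompact_Icc
        (mulVec_contOn' (M := fun s => Z₂ i s * Shat i s) (v := φ i)
          (entry_mul_contOn' (M := fun s => Z₂ i s) (N := fun s => Shat i s)
            (hZ₂ i) (hShat i)) (hφ i))).smul c⁻¹
    have hprod : ∀ j l, ContinuousOn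
        (fun q : ℝ × ℝ => (c⁻¹ • ((Z₂ i q.1 * Rhat i j q.1 q.2).mulVec (φ j q.2))) l)
        ((Set.Icc (-(τ i)) 0) ×ˢ (Set.Icc (-(τ j)) 0)) := by
      intro j l
      exact continuousOn_const.mul
        (mulVec_contOn' (M := fun q : ℝ × ℝ => Z₂ i q.1 * Rhat i j q.1 q.2)
          (v := fun q : ℝ × ℝ => φ j q.2)
          (entry_mul_contOn' (M := fun q : ℝ × ℝ => Z₂ i q.1)
            (N := fun q : ℝ × ℝ => Rhat i j q.1 q.2)
            (fun k m => (hZ₂ i k m).comp continuous_fst.continuousOn fun q hq => hq.1)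
            (fun k m => hRhat i j k m))
          (fun m => (hφ j m).comp continuous_snd.continuousOn fun q hq => hq.2) l)
    have hd : ∀ j : Fin (K + 1), IntegrableOn
        (fun s => ∫ θ in Set.Icc (-(τ j)) 0,
          c⁻¹ • ((Z₂ i s * Rhat i j s θ).mulVec (φ j θ))) (Set.Icc (-(τ i)) 0) := by
      intro j
      have hint : Integrable
          (fun q : ℝ × ℝ => c⁻¹ • ((Z₂ i q.1 * Rhat i j q.1 q.2).mulVec (φ j q.2)))
          ((volume.restrict (Set.Icc (-(τ i)) 0)).prod
            (volume.restrict (Set.Icc (-(τ j)) 0))) :=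
        integrable_prod_restrict' isCompact_Icc isCompact_Icc (hprod j)
      exact hint.integral_prod_left
    have hsum : IntegrableOn (fun s => ∑ j, ∫ θ in Set.Icc (-(τ j)) 0,
        c⁻¹ • ((Z₂ i s * Rhat i j s θ).mulVec (φ j θ))) (Set.Icc (-(τ i)) 0) :=
      integrable_finset_sum _ fun j _ => hd j
    have hab : IntegrableOn (fun s => (Z₂ i s * (Qhat i s)ᵀ).mulVec x
        + c⁻¹ • ((Z₂ i s * Shat i s).mulVec (φ i s))) (Set.Icc (-(τ i)) 0) := ha.add hb
    rw [integral_add hab hsum, integral_add ha hb,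
      integral_finset_sum _ fun j _ => hd j]
    congr 1
    exact Finset.sum_congr rfl fun j _ => fubini_Icc' isCompact_Icc isCompact_Icc (hprod j)
  -- R0
  have R0 : K₀.mulVec x = (Z₀ * Phat).mulVec x
      + ∑ j, ((Z₁ j * (Qhat j (-(τ j)))ᵀ).mulVec x
        + ∫ s in Set.Icc (-(τ j)) 0, (Z₂ j s * (Qhat j s)ᵀ).mulVec x) := by
    rw [hK₀, Matrix.add_mulVec, sum_mulVec']
    congr 1
    refine Finset.sum_congr rfl fun j _ => ?_
    have hmint : (mIntOn (Set.Icc (-(τ j)) 0)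
          (fun s => Z₂ j s * (Qhat j s)ᵀ)).mulVec x
        = ∫ s in Set.Icc (-(τ j)) 0, (Z₂ j s * (Qhat j s)ᵀ).mulVec x :=
      mIntOn_mulVec' isCompact_Icc
        (entry_mul_contOn' (M := fun s => Z₂ j s) (N := fun s => (Qhat j s)ᵀ)
          (hZ₂ j) (fun k l => hQhat j l k)) x
    rw [Matrix.add_mulVec, hmint]
  -- R1
  have R1 : ∀ i, (K₁ i).mulVec (φ i (-(τ i)))
      = c⁻¹ • ((Z₁ i * Shat i (-(τ i))).mulVec (φ i (-(τ i)))) := by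
    intro i
    rw [hK₁ i, Matrix.smul_mulVec]
  -- R2
  have R2 : ∀ i, (∫ s in Set.Icc (-(τ i)) 0, (K₂ i s).mulVec (φ i s))
      = (∫ s in Set.Icc (-(τ i)) 0, c⁻¹ • ((Z₀ * Qhat i s).mulVec (φ i s)))
        + (∫ s in Set.Icc (-(τ i)) 0, c⁻¹ • ((Z₂ i s * Shat i s).mulVec (φ i s)))
        + ∑ j, ((∫ s in Set.Icc (-(τ i)) 0,
              c⁻¹ • ((Z₁ j * Rhat j i (-(τ j)) s).mulVec (φ i s)))
          + ∫ s in Set.Icc (-(τ i)) 0, ∫ θ in Set.Icc (-(τ j)) 0,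
              c⁻¹ • ((Z₂ j θ * Rhat j i θ s).mulVec (φ i s))) := by
    intro i
    have hEq : Set.EqOn (fun s => (K₂ i s).mulVec (φ i s))
        (fun s => c⁻¹ • ((Z₀ * Qhat i s).mulVec (φ i s))
          + c⁻¹ • ((Z₂ i s * Shat i s).mulVec (φ i s))
          + ∑ j, (c⁻¹ • ((Z₁ j * Rhat j i (-(τ j)) s).mulVec (φ i s))
            + ∫ θ in Set.Icc (-(τ j)) 0,
                c⁻¹ • ((Z₂ j θ * Rhat j i θ s).mulVec (φ i s))))
        (Set.Icc (-(τ i)) 0) := by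
      intro s hs
      show (K₂ i s).mulVec (φ i s) = _
      rw [hK₂ i s, Matrix.smul_mulVec, Matrix.add_mulVec, Matrix.add_mulVec,
        sum_mulVec', smul_add, smul_add, Finset.smul_sum]
      congr 1
      refine Finset.sum_congr rfl fun j _ => ?_
      have hmint : (mIntOn (Set.Icc (-(τ j)) 0)
            (fun θ => Z₂ j θ * Rhat j i θ s)).mulVec (φ i s)
          = ∫ θ in Set.Icc (-(τ j)) 0, (Z₂ j θ * Rhat j i θ s).mulVec (φ i s) :=
        mIntOn_mulVec' isCompact_Icc
          (entry_mul_contOn' (M := fun θ => Z₂ j θ) (N := fun θ => Rhat j i θ s)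
            (hZ₂ j) (hR2 j i hs)) (φ i s)
      rw [Matrix.add_mulVec, smul_add, hmint, ← integral_smul]
    rw [setIntegral_congr_fun measurableSet_Icc hEq]
    -- integrability
    have ha : IntegrableOn (fun s => c⁻¹ • ((Z₀ * Qhat i s).mulVec (φ i s)))
        (Set.Icc (-(τ i)) 0) :=
      (integrableOn_pi' isCompact_Icc
        (mulVec_contOn' (M := fun s => Z₀ * Qhat i s) (v := φ i)
          (entry_mul_contOn' (M := fun _ => Z₀) (N := fun s => Qhat i s)
            (fun k m => continuousOn_const) (hQhat i)) (hφ i))).smul c⁻¹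
    have hb : IntegrableOn (fun s => c⁻¹ • ((Z₂ i s * Shat i s).mulVec (φ i s)))
        (Set.Icc (-(τ i)) 0) :=
      (integrableOn_pi' isCompact_Icc
        (mulVec_contOn' (M := fun s => Z₂ i s * Shat i s) (v := φ i)
          (entry_mul_contOn' (M := fun s => Z₂ i s) (N := fun s => Shat i s)
            (hZ₂ i) (hShat i)) (hφ i))).smul c⁻¹
    have hcj : ∀ j : Fin (K + 1), IntegrableOn
        (fun s => c⁻¹ • ((Z₁ j * Rhat j i (-(τ j)) s).mulVec (φ i s)))
        (Set.Icc (-(τ i)) 0) :=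
      fun j => (integrableOn_pi' isCompact_Icc
        (mulVec_contOn' (M := fun s => Z₁ j * Rhat j i (-(τ j)) s) (v := φ i)
          (entry_mul_contOn' (M := fun _ => Z₁ j) (N := fun s => Rhat j i (-(τ j)) s)
            (fun k m => continuousOn_const)
            (hR1 j i (hmemA j))) (hφ i))).smul c⁻¹
    have hdj : ∀ j : Fin (K + 1), IntegrableOn
        (fun s => ∫ θ in Set.Icc (-(τ j)) 0,
          c⁻¹ • ((Z₂ j θ * Rhat j i θ s).mulVec (φ i s))) (Set.Icc (-(τ i)) 0) := by
      intro j
      have hint : Integrable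
          (fun q : ℝ × ℝ => c⁻¹ • ((Z₂ j q.2 * Rhat j i q.2 q.1).mulVec (φ i q.1)))
          ((volume.restrict (Set.Icc (-(τ i)) 0)).prod
            (volume.restrict (Set.Icc (-(τ j)) 0))) := by
        refine integrable_prod_restrict' isCompact_Icc isCompact_Icc ?_
        intro l
        exact continuousOn_const.mul
          (mulVec_contOn' (M := fun q : ℝ × ℝ => Z₂ j q.2 * Rhat j i q.2 q.1)
            (v := fun q : ℝ × ℝ => φ i q.1)
            (entry_mul_contOn' (M := fun q : ℝ × ℝ => Z₂ j q.2)
              (N := fun q : ℝ × ℝ => Rhat j i q.2 q.1)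
              (fun k m => (hZ₂ j k m).comp continuous_snd.continuousOn fun q hq => hq.2)
              (fun k m => (hRhat j i k m).comp continuous_swap.continuousOn
                fun q hq => Set.mk_mem_prod hq.2 hq.1))
            (fun m => (hφ i m).comp continuous_fst.continuousOn fun q hq => hq.1) l)
      exact hint.integral_prod_left
    have hsum : IntegrableOn (fun s => ∑ j,
        (c⁻¹ • ((Z₁ j * Rhat j i (-(τ j)) s).mulVec (φ i s))
          + ∫ θ in Set.Icc (-(τ j)) 0,
              c⁻¹ • ((Z₂ j θ * Rhat j i θ s).mulVec (φ i s))))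
        (Set.Icc (-(τ i)) 0) :=
      integrable_finset_sum _ fun j _ => (hcj j).add (hdj j)
    have hab : IntegrableOn (fun s => c⁻¹ • ((Z₀ * Qhat i s).mulVec (φ i s))
        + c⁻¹ • ((Z₂ i s * Shat i s).mulVec (φ i s))) (Set.Icc (-(τ i)) 0) := ha.add hb
    have hjint : ∀ j : Fin (K + 1), IntegrableOn
        (fun s => c⁻¹ • ((Z₁ j * Rhat j i (-(τ j)) s).mulVec (φ i s))
          + ∫ θ in Set.Icc (-(τ j)) 0,
              c⁻¹ • ((Z₂ j θ * Rhat j i θ s).mulVec (φ i s)))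
        (Set.Icc (-(τ i)) 0) := fun j => (hcj j).add (hdj j)
    rw [integral_add hab hsum, integral_add ha hb,
      integral_finset_sum _ fun j _ => hjint j]
    congr 1
    exact Finset.sum_congr rfl fun j _ => integral_add (hcj j) (hdj j)
  -- assemble
  rw [T1, R0]
  simp only [T2, T3, R2, R1]
  simp only [Finset.sum_add_distrib]
  rw [show (∑ i : Fin (K + 1), ∑ j : Fin (K + 1), ∫ s in Set.Icc (-(τ i)) 0,
        c⁻¹ • ((Z₁ j * Rhat j i (-(τ j)) s).mulVec (φ i s)))
      = ∑ j : Fin (K + 1), ∑ i : Fin (K + 1), ∫ s in Set.Icc (-(τ i)) 0,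
        c⁻¹ • ((Z₁ j * Rhat j i (-(τ j)) s).mulVec (φ i s)) from Finset.sum_comm]
  rw [show (∑ i : Fin (K + 1), ∑ j : Fin (K + 1), ∫ s in Set.Icc (-(τ i)) 0,
        ∫ θ in Set.Icc (-(τ j)) 0, c⁻¹ • ((Z₂ j θ * Rhat j i θ s).mulVec (φ i s)))
      = ∑ j : Fin (K + 1), ∑ i : Fin (K + 1), ∫ s in Set.Icc (-(τ i)) 0,
        ∫ θ in Set.Icc (-(τ j)) 0, c⁻¹ • ((Z₂ j θ * Rhat j i θ s).mulVec (φ i s))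
      from Finset.sum_comm]
  abel
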